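/- Let f̃ : [n] × [n] × (ℝ^{3×n})² → ℝ satisfy the covariance property f̃^{τ(i)}_{τ(t)}(τX, τV) = f̃^i_t(X,V) for all τ ∈ S_n. Then there exist a function f of the data (x_i, v_i) and the multiset {{(x_k, v_k) : k ≠ i}}, invariant to permutations of the remaining n−1 columns, with f̃^i_i(X,V) = f(x_i, v_i, X_{∖i}, V_{∖i}), and a function g of ((x_i,v_i),(x_t,v_t)) and the multiset of remaining n−2 columns, invariant to permutations of those columns, with f̃^i_t(X,V) = g((x_i,v_i),(x_t,v_t), X_{∖i,t}, V_{∖i,t}) for t ≠ i. -/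

import Mathlib

section Aux

lemma univ_val_succ {n : ℕ} {α : Type*} (f : Fin (n+1) → α) :
    Multiset.map f Finset.univ.val = f 0 ::ₘ Multiset.map (f ∘ Fin.succ) Finset.univ.val := by
  have h1 : (Finset.univ.val : Multiset (Fin (n+1))) = ↑(List.finRange (n+1)) := rfl
  have h2 : (Finset.univ.val : Multiset (Fin n)) = ↑(List.finRange n) := rfl
  rw [h1, h2, List.finRange_succ]
  simp [Multiset.map_map, Function.comp_def]

lemma map_univ_comp_perm {n : ℕ} {α : Type*} (f : Fin n → α) (σ : Equiv.Perm (Fin n)) :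
    Multiset.map (fun k => f (σ k)) Finset.univ.val = Multiset.map f Finset.univ.val := by
  rw [show (fun k => f (σ k)) = f ∘ σ from rfl, ← Multiset.map_map]
  congr 1
  have := congrArg Finset.val (Finset.map_univ_equiv σ)
  simpa using this

lemma exists_comp_eq {α : Type*} : ∀ {n : ℕ} (f g : Fin n → α),
    Multiset.map f Finset.univ.val = Multiset.map g Finset.univ.val →
    ∃ σ : Equiv.Perm (Fin n), ∀ k, f (σ k) = g k := by
  intro n
  induction n with
  | zero => intro f g _; exact ⟨1, fun k => k.elim0⟩
  | succ n ih =>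
    intro f g h
    have hmem : g 0 ∈ Multiset.map f Finset.univ.val := by
      rw [h]; exact Multiset.mem_map_of_mem _ (Finset.mem_univ_val _)
    obtain ⟨j, -, hj⟩ := Multiset.mem_map.mp hmem
    set f' : Fin (n+1) → α := fun k => f (Equiv.swap 0 j k) with hf'
    have hswap : Multiset.map f' Finset.univ.val = Multiset.map f Finset.univ.val :=
      map_univ_comp_perm f _
    have hf0 : f' 0 = g 0 := by simp [hf', Equiv.swap_apply_left, hj]
    have htail : Multiset.map (f' ∘ Fin.succ) Finset.univ.val
        = Multiset.map (g ∘ Fin.succ) Finset.univ.val := by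
      have := (univ_val_succ f').symm.trans ((hswap.trans h).trans (univ_val_succ g))
      rw [hf0] at this
      exact (Multiset.cons_inj_right _).mp this
    obtain ⟨σ', hσ'⟩ := ih (f' ∘ Fin.succ) (g ∘ Fin.succ) htail
    refine ⟨((Equiv.Perm.decomposeFin.symm (0, σ') : Equiv.Perm (Fin (n+1)))).trans
      (Equiv.swap 0 j), ?_⟩
    intro k
    simp only [Equiv.trans_apply]
    induction k using Fin.cases with
    | zero => simpa [Equiv.Perm.decomposeFin_symm_apply_zero, hf'] using hf0
    | succ k =>
      have h1 : (Equiv.Perm.decomposeFin.symm (0, σ')) k.succ = (σ' k).succ := by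
        simp [Equiv.Perm.decomposeFin_symm_apply_succ]
      rw [h1]
      exact hσ' k

lemma comp_swap_eq {α β : Type*} [DecidableEq β] (f : β → α) (a b : β) (h : f a = f b) :
    ∀ x, f (Equiv.swap a b x) = f x := by
  intro x
  rcases eq_or_ne x a with rfl | ha
  · rw [Equiv.swap_apply_left, h]
  rcases eq_or_ne x b with rfl | hb
  · rw [Equiv.swap_apply_right, h]
  · rw [Equiv.swap_apply_of_ne_of_ne ha hb]

lemma exists_perm_adjust {α : Type*} {n : ℕ} (f g : Fin n → α) (i j : Fin n)
    (hp : f i = g j)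
    (h : Multiset.map f Finset.univ.val = Multiset.map g Finset.univ.val) :
    ∃ σ : Equiv.Perm (Fin n), (∀ k, f (σ k) = g k) ∧ σ j = i := by
  obtain ⟨σ, hσ⟩ := exists_comp_eq f g h
  have hfs : f (σ j) = f i := (hσ j).trans hp.symm
  refine ⟨σ.trans (Equiv.swap (σ j) i), fun k => ?_, ?_⟩
  · simp only [Equiv.trans_apply]
    rw [comp_swap_eq f (σ j) i hfs, hσ]
  · simp [Equiv.swap_apply_left]

lemma exists_perm_adjust₂ {α : Type*} {n : ℕ} (f g : Fin n → α) (i t j s : Fin n)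
    (hti : t ≠ i) (hsj : s ≠ j) (hp : f i = g j) (hq : f t = g s)
    (h : Multiset.map f Finset.univ.val = Multiset.map g Finset.univ.val) :
    ∃ σ : Equiv.Perm (Fin n), (∀ k, f (σ k) = g k) ∧ σ j = i ∧ σ s = t := by
  obtain ⟨σ, hσ, hσj⟩ := exists_perm_adjust f g i j hp h
  have hfs : f (σ s) = f t := (hσ s).trans hq.symm
  have hσsi : σ s ≠ i := by
    rw [← hσj]; exact fun hc => hsj (σ.injective hc)
  refine ⟨σ.trans (Equiv.swap (σ s) t), fun k => ?_, ?_, ?_⟩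
  · simp only [Equiv.trans_apply]
    rw [comp_swap_eq f (σ s) t hfs, hσ]
  · simp only [Equiv.trans_apply, hσj]
    rw [Equiv.swap_apply_of_ne_of_ne (Ne.symm hσsi) (Ne.symm hti)]
  · simp [Equiv.swap_apply_left]

lemma cons_erase_univ {n : ℕ} (i : Fin n) :
    i ::ₘ (Finset.univ.erase i).val = Finset.univ.val := by
  rw [Finset.erase_val]
  exact Multiset.cons_erase (Finset.mem_univ_val i)

lemma cons_erase_erase {n : ℕ} (i t : Fin n) (h : t ≠ i) :
    t ::ₘ ((Finset.univ.erase i).erase t).val = (Finset.univ.erase i).val := by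
  rw [Finset.erase_val ((Finset.univ.erase i))]
  exact Multiset.cons_erase ((Multiset.mem_erase_of_ne h).mpr (Finset.mem_univ_val t))

end Aux

/-- A doubly-indexed family of coefficient functions satisfying the `S_n`-covariance property
`f̃^{τ(i)}_{τ(t)}(τX,τV) = f̃ⁱₜ(X,V)` is, on the diagonal, a function of `(xᵢ,vᵢ)` and the
multiset of the remaining columns, and off the diagonal a function of `(xᵢ,vᵢ)`, `(xₜ,vₜ)` and
the multiset of the remaining columns. -/
theorem covariant_coeffs_are_multiset_functions (n : ℕ)
    (ft : Fin n → Fin n →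
      (Fin n → EuclideanSpace ℝ (Fin 3)) × (Fin n → EuclideanSpace ℝ (Fin 3)) → ℝ)
    (hcov : ∀ (τ : Equiv.Perm (Fin n)) (i t : Fin n) X V,
      ft (τ i) (τ t) (fun k => X (τ⁻¹ k), fun k => V (τ⁻¹ k)) = ft i t (X, V)) :
    ∃ (f : (EuclideanSpace ℝ (Fin 3) × EuclideanSpace ℝ (Fin 3)) →
          Multiset (EuclideanSpace ℝ (Fin 3) × EuclideanSpace ℝ (Fin 3)) → ℝ)
      (g : (EuclideanSpace ℝ (Fin 3) × EuclideanSpace ℝ (Fin 3)) →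
          (EuclideanSpace ℝ (Fin 3) × EuclideanSpace ℝ (Fin 3)) →
          Multiset (EuclideanSpace ℝ (Fin 3) × EuclideanSpace ℝ (Fin 3)) → ℝ),
      (∀ (i : Fin n) X V, ft i i (X, V) =
        f (X i, V i) ((Finset.univ.erase i).val.map (fun k => (X k, V k)))) ∧
      (∀ (i t : Fin n) X V, t ≠ i → ft i t (X, V) =
        g (X i, V i) (X t, V t)
          (((Finset.univ.erase i).erase t).val.map (fun k => (X k, V k)))) := by
  classical
  -- key diagonal lemma
  have keyd : ∀ (i j : Fin n) X V Y W, (X i, V i) = (Y j, W j) →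
      (Finset.univ.erase i).val.map (fun k => (X k, V k))
        = (Finset.univ.erase j).val.map (fun k => (Y k, W k)) →
      ft i i (X, V) = ft j j (Y, W) := by
    intro i j X V Y W hp hm
    have hXf := congrArg (Multiset.map (fun k => (X k, V k))) (cons_erase_univ i).symm
    have hYf := congrArg (Multiset.map (fun k => (Y k, W k))) (cons_erase_univ j).symm
    rw [Multiset.map_cons] at hXf hYf
    have hfull : Multiset.map (fun k => (X k, V k)) Finset.univ.val
        = Multiset.map (fun k => (Y k, W k)) Finset.univ.val := by
      rw [hXf, hYf, hp, hm]
    obtain ⟨σ, hσ, hσj⟩ := exists_perm_adjust (fun k => (X k, V k)) (fun k => (Y k, W k))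
      i j hp hfull
    have := hcov σ j j Y W
    rw [hσj] at this
    have hX : (fun k => Y (σ⁻¹ k)) = X := by
      funext k
      have h1 := hσ (σ⁻¹ k)
      rw [show σ (σ⁻¹ k) = k from σ.apply_symm_apply k] at h1
      exact (congrArg Prod.fst h1).symm
    have hV : (fun k => W (σ⁻¹ k)) = V := by
      funext k
      have h1 := hσ (σ⁻¹ k)
      rw [show σ (σ⁻¹ k) = k from σ.apply_symm_apply k] at h1
      exact (congrArg Prod.snd h1).symm
    rw [hX, hV] at this
    exact this
  -- key off-diagonal lemma
  have keyg : ∀ (i t j s : Fin n) X V Y W, t ≠ i → s ≠ j →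
      (X i, V i) = (Y j, W j) → (X t, V t) = (Y s, W s) →
      ((Finset.univ.erase i).erase t).val.map (fun k => (X k, V k))
        = ((Finset.univ.erase j).erase s).val.map (fun k => (Y k, W k)) →
      ft i t (X, V) = ft j s (Y, W) := by
    intro i t j s X V Y W hti hsj hp hq hm
    have hXf := congrArg (Multiset.map (fun k => (X k, V k))) (cons_erase_univ i).symm
    have hYf := congrArg (Multiset.map (fun k => (Y k, W k))) (cons_erase_univ j).symm
    have hXe := congrArg (Multiset.map (fun k => (X k, V k))) (cons_erase_erase i t hti).symm
    have hYe := congrArg (Multiset.map (fun k => (Y k, W k))) (cons_erase_erase j s hsj).symm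
    rw [Multiset.map_cons] at hXf hYf hXe hYe
    have hfull : Multiset.map (fun k => (X k, V k)) Finset.univ.val
        = Multiset.map (fun k => (Y k, W k)) Finset.univ.val := by
      rw [hXf, hYf, hXe, hYe, hp, hq, hm]
    obtain ⟨σ, hσ, hσj, hσs⟩ := exists_perm_adjust₂ (fun k => (X k, V k)) (fun k => (Y k, W k))
      i t j s hti hsj hp hq hfull
    have := hcov σ j s Y W
    rw [hσj, hσs] at this
    have hX : (fun k => Y (σ⁻¹ k)) = X := by
      funext k
      have h1 := hσ (σ⁻¹ k)
      rw [show σ (σ⁻¹ k) = k from σ.apply_symm_apply k] at h1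
      exact (congrArg Prod.fst h1).symm
    have hV : (fun k => W (σ⁻¹ k)) = V := by
      funext k
      have h1 := hσ (σ⁻¹ k)
      rw [show σ (σ⁻¹ k) = k from σ.apply_symm_apply k] at h1
      exact (congrArg Prod.snd h1).symm
    rw [hX, hV] at this
    exact this
  refine ⟨fun p m =>
      if h : ∃ d : Fin n × (Fin n → EuclideanSpace ℝ (Fin 3)) ×
          (Fin n → EuclideanSpace ℝ (Fin 3)),
          (d.2.1 d.1, d.2.2 d.1) = p ∧
          (Finset.univ.erase d.1).val.map (fun k => (d.2.1 k, d.2.2 k)) = m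
      then ft h.choose.1 h.choose.1 (h.choose.2.1, h.choose.2.2) else 0,
    fun p q m =>
      if h : ∃ d : (Fin n × Fin n) × (Fin n → EuclideanSpace ℝ (Fin 3)) ×
          (Fin n → EuclideanSpace ℝ (Fin 3)),
          d.1.2 ≠ d.1.1 ∧ (d.2.1 d.1.1, d.2.2 d.1.1) = p ∧ (d.2.1 d.1.2, d.2.2 d.1.2) = q ∧
          ((Finset.univ.erase d.1.1).erase d.1.2).val.map (fun k => (d.2.1 k, d.2.2 k)) = m
      then ft h.choose.1.1 h.choose.1.2 (h.choose.2.1, h.choose.2.2) else 0, ?_, ?_⟩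
  · intro i X V
    have h : ∃ d : Fin n × (Fin n → EuclideanSpace ℝ (Fin 3)) ×
        (Fin n → EuclideanSpace ℝ (Fin 3)),
        (d.2.1 d.1, d.2.2 d.1) = (X i, V i) ∧
        (Finset.univ.erase d.1).val.map (fun k => (d.2.1 k, d.2.2 k))
          = (Finset.univ.erase i).val.map (fun k => (X k, V k)) :=
      ⟨⟨i, X, V⟩, rfl, rfl⟩
    beta_reduce
    rw [dif_pos h]
    obtain ⟨hp, hm⟩ := h.choose_spec
    exact (keyd h.choose.1 i h.choose.2.1 h.choose.2.2 X V hp hm).symm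
  · intro i t X V hti
    have h : ∃ d : (Fin n × Fin n) × (Fin n → EuclideanSpace ℝ (Fin 3)) ×
        (Fin n → EuclideanSpace ℝ (Fin 3)),
        d.1.2 ≠ d.1.1 ∧ (d.2.1 d.1.1, d.2.2 d.1.1) = (X i, V i) ∧
        (d.2.1 d.1.2, d.2.2 d.1.2) = (X t, V t) ∧
        ((Finset.univ.erase d.1.1).erase d.1.2).val.map (fun k => (d.2.1 k, d.2.2 k))
          = ((Finset.univ.erase i).erase t).val.map (fun k => (X k, V k)) :=
      ⟨⟨⟨i, t⟩, X, V⟩, hti, rfl, rfl, rfl⟩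
    beta_reduce
    rw [dif_pos h]
    obtain ⟨hne, hp, hq, hm⟩ := h.choose_spec
    exact (keyg h.choose.1.1 h.choose.1.2 i t h.choose.2.1 h.choose.2.2 X V
      hne hti hp hq hm).symm
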